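/- Under the conditions of Example 2, the generalized predator-prey system ẋ₁ = x₁(a - βc x₁^α x₂^β - δb x₁^γ x₂^δ), ẋ₂ = x₂(-d + αc x₁^α x₂^β + γb x₁^γ x₂^δ) with a,b,c,d,α,β,γ,δ > 0 and αδ - βγ > 0, has a fixed point in the open positive orthant if and only if δ/γ > a/d > β/α; moreover when it exists the fixed point is unique. -/

import Mathlib

open Real

theorem generalized_predator_prey_fixed_point (a b c d α β γ δ : ℝ)
    (ha : 0 < a) (hb : 0 < b) (hc : 0 < c) (hd : 0 < d)
    (hα : 0 < α) (hβ : 0 < β) (hγ : 0 < γ) (hδ : 0 < δ)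
    (hdet : 0 < α * δ - β * γ) :
    ((∃ x₁ x₂ : ℝ, 0 < x₁ ∧ 0 < x₂ ∧
        a - β * c * x₁ ^ α * x₂ ^ β - δ * b * x₁ ^ γ * x₂ ^ δ = 0 ∧
        -d + α * c * x₁ ^ α * x₂ ^ β + γ * b * x₁ ^ γ * x₂ ^ δ = 0) ↔
      (δ / γ > a / d ∧ a / d > β / α)) ∧
    (∀ x₁ x₂ y₁ y₂ : ℝ,
      0 < x₁ → 0 < x₂ →
      a - β * c * x₁ ^ α * x₂ ^ β - δ * b * x₁ ^ γ * x₂ ^ δ = 0 →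
      -d + α * c * x₁ ^ α * x₂ ^ β + γ * b * x₁ ^ γ * x₂ ^ δ = 0 →
      0 < y₁ → 0 < y₂ →
      a - β * c * y₁ ^ α * y₂ ^ β - δ * b * y₁ ^ γ * y₂ ^ δ = 0 →
      -d + α * c * y₁ ^ α * y₂ ^ β + γ * b * y₁ ^ γ * y₂ ^ δ = 0 →
      x₁ = y₁ ∧ x₂ = y₂) := by
  have hD : α * δ - β * γ ≠ 0 := ne_of_gt hdet
  constructor
  · constructor
    · rintro ⟨x₁, x₂, hx₁, hx₂, h1, h2⟩
      have hu0 : 0 < c * x₁ ^ α * x₂ ^ β := by positivity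
      have hv0 : 0 < b * x₁ ^ γ * x₂ ^ δ := by positivity
      constructor
      · rw [gt_iff_lt, div_lt_div_iff₀ hd hγ]
        nlinarith [mul_pos hdet hu0]
      · rw [gt_iff_lt, div_lt_div_iff₀ hα hd]
        nlinarith [mul_pos hdet hv0]
    · rintro ⟨hi1, hi2⟩
      rw [gt_iff_lt, div_lt_div_iff₀ hd hγ] at hi1
      rw [gt_iff_lt, div_lt_div_iff₀ hα hd] at hi2
      obtain ⟨u, hu_def⟩ : ∃ u : ℝ, u = (d * δ - a * γ) / (α * δ - β * γ) := ⟨_, rfl⟩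
      obtain ⟨v, hv_def⟩ : ∃ v : ℝ, v = (a * α - d * β) / (α * δ - β * γ) := ⟨_, rfl⟩
      have hu0 : 0 < u := hu_def ▸ div_pos (by nlinarith) hdet
      have hv0 : 0 < v := hv_def ▸ div_pos (by nlinarith) hdet
      obtain ⟨L₁, hL1⟩ : ∃ L : ℝ, L = Real.log (u / c) := ⟨_, rfl⟩
      obtain ⟨L₂, hL2⟩ : ∃ L : ℝ, L = Real.log (v / b) := ⟨_, rfl⟩
      obtain ⟨t₁, ht1⟩ : ∃ t : ℝ, t = (δ * L₁ - β * L₂) / (α * δ - β * γ) := ⟨_, rfl⟩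
      obtain ⟨t₂, ht2⟩ : ∃ t : ℝ, t = (α * L₂ - γ * L₁) / (α * δ - β * γ) := ⟨_, rfl⟩
      have e1 : Real.exp t₁ ^ α * Real.exp t₂ ^ β = u / c := by
        rw [← Real.exp_log (x := u / c) (div_pos hu0 hc), ← hL1,
          Real.rpow_def_of_pos (Real.exp_pos t₁), Real.rpow_def_of_pos (Real.exp_pos t₂),
          Real.log_exp, Real.log_exp, ← Real.exp_add]
        congr 1
        rw [ht1, ht2]
        linear_combination L₁ * mul_inv_cancel₀ hD
      have e2 : Real.exp t₁ ^ γ * Real.exp t₂ ^ δ = v / b := by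
        rw [← Real.exp_log (x := v / b) (div_pos hv0 hb), ← hL2,
          Real.rpow_def_of_pos (Real.exp_pos t₁), Real.rpow_def_of_pos (Real.exp_pos t₂),
          Real.log_exp, Real.log_exp, ← Real.exp_add]
        congr 1
        rw [ht1, ht2]
        linear_combination L₂ * mul_inv_cancel₀ hD
      have ec : c * (Real.exp t₁ ^ α * Real.exp t₂ ^ β) = u := by
        rw [e1]; field_simp
      have ed : b * (Real.exp t₁ ^ γ * Real.exp t₂ ^ δ) = v := by
        rw [e2]; field_simp
      have hEq1 : a - β * u - δ * v = 0 := by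
        rw [hu_def, hv_def]; linear_combination (-a) * mul_inv_cancel₀ hD
      have hEq2 : -d + α * u + γ * v = 0 := by
        rw [hu_def, hv_def]; linear_combination d * mul_inv_cancel₀ hD
      refine ⟨Real.exp t₁, Real.exp t₂, Real.exp_pos _, Real.exp_pos _, ?_, ?_⟩
      · linear_combination hEq1 - β * ec - δ * ed
      · linear_combination hEq2 + α * ec + γ * ed
  · intro x₁ x₂ y₁ y₂ hx₁ hx₂ hx3 hx4 hy₁ hy₂ hy3 hy4
    have hux : (α * δ - β * γ) * (c * x₁ ^ α * x₂ ^ β) = d * δ - a * γ := by linear_combination δ * hx4 + γ * hx3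
    have huy : (α * δ - β * γ) * (c * y₁ ^ α * y₂ ^ β) = d * δ - a * γ := by linear_combination δ * hy4 + γ * hy3
    have hvx : (α * δ - β * γ) * (b * x₁ ^ γ * x₂ ^ δ) = a * α - d * β := by linear_combination -α * hx3 - β * hx4
    have hvy : (α * δ - β * γ) * (b * y₁ ^ γ * y₂ ^ δ) = a * α - d * β := by linear_combination -α * hy3 - β * hy4
    have hu : x₁ ^ α * x₂ ^ β = y₁ ^ α * y₂ ^ β := by
      have := mul_left_cancel₀ hD (hux.trans huy.symm)
      exact mul_left_cancel₀ (ne_of_gt hc) (by linarith [this] ; )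
    have hv : x₁ ^ γ * x₂ ^ δ = y₁ ^ γ * y₂ ^ δ := by
      have := mul_left_cancel₀ hD (hvx.trans hvy.symm)
      exact mul_left_cancel₀ (ne_of_gt hb) (by linarith [this])
    have lu : α * Real.log x₁ + β * Real.log x₂ = α * Real.log y₁ + β * Real.log y₂ := by
      have := congrArg Real.log hu
      rwa [Real.log_mul (by positivity) (by positivity),
        Real.log_mul (by positivity) (by positivity),
        Real.log_rpow hx₁, Real.log_rpow hx₂, Real.log_rpow hy₁, Real.log_rpow hy₂] at this
    have lv : γ * Real.log x₁ + δ * Real.log x₂ = γ * Real.log y₁ + δ * Real.log y₂ := by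
      have := congrArg Real.log hv
      rwa [Real.log_mul (by positivity) (by positivity),
        Real.log_mul (by positivity) (by positivity),
        Real.log_rpow hx₁, Real.log_rpow hx₂, Real.log_rpow hy₁, Real.log_rpow hy₂] at this
    have l1 : Real.log x₁ = Real.log y₁ :=
      mul_left_cancel₀ hD (by linear_combination δ * lu - β * lv)
    have l2 : Real.log x₂ = Real.log y₂ :=
      mul_left_cancel₀ hD (by linear_combination α * lv - γ * lu)
    constructor
    · rw [← Real.exp_log hx₁, ← Real.exp_log hy₁, l1]
    · rw [← Real.exp_log hx₂, ← Real.exp_log hy₂, l2]
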